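/- (Boundedness of the eigenvector influence function, Theorem 4.) Let V be a symmetric positive definite p×p real matrix with spectral decomposition V = Σ_{i=1}^p λ_i γ_i γ_iᵀ, where λ_1 > λ_2 > ⋯ > λ_p > 0 are distinct and (γ_1,…,γ_p) is an orthonormal basis of ℝ^p. Fix j ∈ {1,…,p}, μ0 ∈ ℝ^p, and a measurable w : [0,∞) → [0,∞). For x ∈ ℝ^p define the eigenvector influence direction IF_j(x) = w(d(x,μ0,V)) · (γ_jᵀ(x−μ0)) · Σ_{i≠j} ( (γ_iᵀ(x−μ0)) / (λ_j − λ_i) ) γ_i. Then there exists a constant C > 0 depending only on V (one may take C = λ_1 / min_{i≠j} |λ_j − λ_i|) such that for all x ∈ ℝ^p, ‖IF_j(x)‖ ≤ C · w(d(x,μ0,V)) · d(x,μ0,V), i.e., the influence function is of order O(h(d(x,μ0,V))) where h(u) = u·w(u). -/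

import Mathlib

open MeasureTheory Matrix Finset

/-- Mahalanobis-type squared distance `d(x, μ, V) = (x−μ)ᵀ V⁻¹ (x−μ)`. -/
noncomputable def mahal {p : ℕ} (x μ : EuclideanSpace ℝ (Fin p))
    (V : Matrix (Fin p) (Fin p) ℝ) : ℝ :=
  ∑ i, ∑ j, (x i - μ i) * V⁻¹ i j * (x j - μ j)

/-- Triple sum rearrangement used for the Mahalanobis distance formula. -/
lemma mahal_sum_rearrange {p : ℕ} (a : Fin p → ℝ) (c : Fin p → ℝ)
    (γ : Fin p → Fin p → ℝ) :
    ∑ k, ∑ m, a k * (∑ i, c i * γ i k * γ i m) * a m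
      = ∑ i, c i * (∑ k, γ i k * a k)^2 := by
  have h1 : ∀ k m : Fin p, a k * (∑ i, c i * γ i k * γ i m) * a m
      = ∑ i, c i * (γ i k * a k) * (γ i m * a m) := by
    intro k m
    rw [Finset.mul_sum, Finset.sum_mul]
    exact Finset.sum_congr rfl fun i _ => by ring
  simp_rw [h1]
  have h2 : ∀ i, c i * (∑ k, γ i k * a k)^2
      = ∑ k, ∑ m, c i * (γ i k * a k) * (γ i m * a m) := by
    intro i
    rw [sq, Finset.sum_mul, Finset.mul_sum]
    refine Finset.sum_congr rfl fun k _ => ?_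
    rw [Finset.mul_sum, Finset.mul_sum]
    exact Finset.sum_congr rfl fun m _ => by ring
  simp_rw [h2]
  calc ∑ k, ∑ m, ∑ i, c i * (γ i k * a k) * (γ i m * a m)
      = ∑ k, ∑ i, ∑ m, c i * (γ i k * a k) * (γ i m * a m) :=
        Finset.sum_congr rfl fun k _ => Finset.sum_comm
    _ = ∑ i, ∑ k, ∑ m, c i * (γ i k * a k) * (γ i m * a m) := Finset.sum_comm

/-- The inverse of `V = Σ λ_i γ_i γ_iᵀ` for orthonormal `γ` and positive `λ`. -/
lemma inv_of_spectral {p : ℕ} (lam : Fin p → ℝ) (γ : Fin p → EuclideanSpace ℝ (Fin p))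
    (hlam_pos : ∀ i, 0 < lam i)
    (horth : ∀ i i' : Fin p, (∑ k, γ i k * γ i' k) = if i = i' then 1 else 0)
    (V : Matrix (Fin p) (Fin p) ℝ)
    (hV : ∀ k m : Fin p, V k m = ∑ i, lam i * γ i k * γ i m) :
    ∀ k m, V⁻¹ k m = ∑ i, (lam i)⁻¹ * γ i k * γ i m := by
  classical
  set G : Matrix (Fin p) (Fin p) ℝ := Matrix.of fun k i => γ i k with hG
  have hGtG : Gᵀ * G = 1 := by
    ext i i'
    simpa [Matrix.mul_apply, Matrix.one_apply, hG] using horth i i'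
  have hGGt : G * Gᵀ = 1 := mul_eq_one_comm.mp hGtG
  set W : Matrix (Fin p) (Fin p) ℝ :=
    G * Matrix.diagonal (fun i => (lam i)⁻¹) * Gᵀ with hW
  have hVdec : V = G * Matrix.diagonal lam * Gᵀ := by
    ext k m
    simp only [Matrix.mul_apply, Matrix.transpose_apply, hV, hG, Matrix.of_apply,
      Matrix.diagonal_apply, Finset.mul_sum, Finset.sum_mul, mul_ite, ite_mul, mul_zero, zero_mul,
      Finset.sum_ite_eq', Finset.mem_univ, if_true]
    exact Finset.sum_congr rfl fun i _ => by ring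
  have hVW : V * W = 1 := by
    rw [hVdec, hW]
    calc G * Matrix.diagonal lam * Gᵀ * (G * Matrix.diagonal (fun i => (lam i)⁻¹) * Gᵀ)
        = G * Matrix.diagonal lam * (Gᵀ * G) * Matrix.diagonal (fun i => (lam i)⁻¹) * Gᵀ := by
          noncomm_ring
      _ = G * (Matrix.diagonal lam * Matrix.diagonal (fun i => (lam i)⁻¹)) * Gᵀ := by
          rw [hGtG]; noncomm_ring
      _ = G * Gᵀ := by
          rw [Matrix.diagonal_mul_diagonal]
          have : (fun i => lam i * (lam i)⁻¹) = fun _ => (1:ℝ) := by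
            funext i; exact mul_inv_cancel₀ (hlam_pos i).ne'
          rw [this, Matrix.diagonal_one, Matrix.mul_one]
      _ = 1 := hGGt
  have hVinv : V⁻¹ = W := Matrix.inv_eq_right_inv hVW
  intro k m
  rw [hVinv, hW]
  simp only [Matrix.mul_apply, Matrix.transpose_apply, hG, Matrix.of_apply,
    Matrix.diagonal_apply, Finset.mul_sum, Finset.sum_mul, mul_ite, ite_mul, mul_zero, zero_mul,
    Finset.sum_ite_eq', Finset.mem_univ, if_true]
  exact Finset.sum_congr rfl fun i _ => by ring

/-- Norm of a linear combination of orthonormal vectors. -/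
lemma norm_sq_sum_smul {p : ℕ} (γ : Fin p → EuclideanSpace ℝ (Fin p))
    (horth : ∀ i i' : Fin p, (∑ k, γ i k * γ i' k) = if i = i' then 1 else 0)
    (c : Fin p → ℝ) (s : Finset (Fin p)) :
    ‖∑ i ∈ s, c i • γ i‖^2 = ∑ i ∈ s, (c i)^2 := by
  have hON : Orthonormal ℝ γ := by
    rw [orthonormal_iff_ite]
    intro i i'
    simpa [PiLp.inner_apply, RCLike.inner_apply, conj_trivial, mul_comm] using horth i i'
  rw [← real_inner_self_eq_norm_sq, hON.inner_sum]
  simp [sq]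

/-- boundedness of the eigenvector influence function,
Theorem 4.  Let `V = Σ λ_i γ_i γ_iᵀ` with distinct eigenvalues
`λ_1 > ⋯ > λ_p > 0` and orthonormal eigenvectors `γ_i`.  For the eigenvector
influence direction
`IF_j(x) = w(d(x,μ0,V)) (γ_jᵀ(x−μ0)) Σ_{i≠j} ((γ_iᵀ(x−μ0))/(λ_j−λ_i)) γ_i`
there is a constant `C > 0` with `‖IF_j(x)‖ ≤ C w(d(x,μ0,V)) d(x,μ0,V)` for
all `x`; i.e. the influence function is `O(h(d(x,μ0,V)))` for `h(u) = u w(u)`. -/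
theorem eigenvector_influence_bounded
    {p : ℕ} (hp : 1 ≤ p)
    (V : Matrix (Fin p) (Fin p) ℝ)
    (lam : Fin p → ℝ) (γ : Fin p → EuclideanSpace ℝ (Fin p))
    (hlam_pos : ∀ i, 0 < lam i)
    (hlam_anti : ∀ i i' : Fin p, i < i' → lam i' < lam i)
    (horth : ∀ i i' : Fin p, (∑ k, γ i k * γ i' k) = if i = i' then 1 else 0)
    (hV : ∀ k m : Fin p, V k m = ∑ i, lam i * γ i k * γ i m)
    (j : Fin p) (μ0 : EuclideanSpace ℝ (Fin p))
    (w : ℝ → ℝ) (hwmeas : Measurable w) (hw0 : ∀ u, 0 ≤ u → 0 ≤ w u)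
    (IFj : EuclideanSpace ℝ (Fin p) → EuclideanSpace ℝ (Fin p))
    (hIFj : ∀ x, IFj x =
      (w (mahal x μ0 V) * (∑ k, γ j k * (x k - μ0 k))) •
        ∑ i ∈ Finset.univ.erase j,
          ((∑ k, γ i k * (x k - μ0 k)) / (lam j - lam i)) • γ i) :
    ∃ C : ℝ, 0 < C ∧ ∀ x : EuclideanSpace ℝ (Fin p),
      ‖IFj x‖ ≤ C * w (mahal x μ0 V) * mahal x μ0 V := by
  classical
  -- notation
  set z : EuclideanSpace ℝ (Fin p) → Fin p → ℝ :=
    fun x i => ∑ k, γ i k * (x k - μ0 k) with hz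
  -- Mahalanobis distance formula
  have hmahal : ∀ x, mahal x μ0 V = ∑ i, (lam i)⁻¹ * (z x i)^2 := by
    intro x
    unfold mahal
    have hinv := inv_of_spectral lam γ hlam_pos horth V hV
    simp_rw [hinv]
    exact mahal_sum_rearrange (fun k => x k - μ0 k) (fun i => (lam i)⁻¹) (fun i k => γ i k)
  have hd0 : ∀ x, 0 ≤ mahal x μ0 V := by
    intro x
    rw [hmahal x]
    exact Finset.sum_nonneg fun i _ => mul_nonneg (inv_nonneg.mpr (hlam_pos i).le) (sq_nonneg _)
  by_cases hne : (Finset.univ.erase j).Nonempty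
  · -- nontrivial case
    set δ : ℝ := (Finset.univ.erase j).inf' hne (fun i => |lam j - lam i|) with hδdef
    have hlamne : ∀ i ∈ Finset.univ.erase j, lam j ≠ lam i := by
      intro i hi
      have hij : i ≠ j := Finset.ne_of_mem_erase hi
      rcases lt_trichotomy i j with h | h | h
      · exact (hlam_anti i j h).ne
      · exact absurd h hij
      · exact (hlam_anti j i h).ne'
    have hδpos : 0 < δ := by
      rw [hδdef, Finset.lt_inf'_iff]
      intro i hi
      exact abs_pos.mpr (sub_ne_zero.mpr (hlamne i hi))
    set lam0 : ℝ := lam ⟨0, hp⟩ with hlam0def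
    have hlam0 : ∀ i, lam i ≤ lam0 := by
      intro i
      rcases eq_or_lt_of_le (show (⟨0, hp⟩ : Fin p) ≤ i by simp [Fin.le_def]) with h | h
      · rw [← h]
      · exact (hlam_anti _ _ h).le
    have hlam0pos : 0 < lam0 := hlam_pos _
    refine ⟨lam0 / δ, div_pos hlam0pos hδpos, fun x => ?_⟩
    set d : ℝ := mahal x μ0 V with hddef
    have hdnn : 0 ≤ d := hd0 x
    have hwd : 0 ≤ w d := hw0 d hdnn
    set S : ℝ := ∑ i, (z x i)^2 with hSdef
    have hSnn : 0 ≤ S := Finset.sum_nonneg fun i _ => sq_nonneg _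
    -- S ≤ lam0 * d
    have hSd : S ≤ lam0 * d := by
      rw [hSdef, hddef, hmahal x, Finset.mul_sum]
      refine Finset.sum_le_sum fun i _ => ?_
      calc (z x i)^2 = lam i * ((lam i)⁻¹ * (z x i)^2) := by
            rw [← mul_assoc, mul_inv_cancel₀ (hlam_pos i).ne', one_mul]
        _ ≤ lam0 * ((lam i)⁻¹ * (z x i)^2) :=
            mul_le_mul_of_nonneg_right (hlam0 i) (mul_nonneg (inv_nonneg.mpr (hlam_pos i).le) (sq_nonneg _))
    -- (z x j)^2 ≤ S
    have hzjS : (z x j)^2 ≤ S :=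
      Finset.single_le_sum (f := fun i => (z x i)^2) (fun i _ => sq_nonneg _) (Finset.mem_univ j)
    -- norm of the direction vector
    set T : EuclideanSpace ℝ (Fin p) :=
      ∑ i ∈ Finset.univ.erase j, ((z x i) / (lam j - lam i)) • γ i with hTdef
    have hT2 : ‖T‖^2 = ∑ i ∈ Finset.univ.erase j, ((z x i) / (lam j - lam i))^2 := by
      rw [hTdef]; exact norm_sq_sum_smul γ horth _ _
    have hTδ : ‖T‖^2 * δ^2 ≤ S := by
      rw [hT2, Finset.sum_mul]
      calc ∑ i ∈ Finset.univ.erase j, ((z x i) / (lam j - lam i))^2 * δ^2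
          ≤ ∑ i ∈ Finset.univ.erase j, (z x i)^2 := by
            refine Finset.sum_le_sum fun i hi => ?_
            have hsub : (0:ℝ) < (lam j - lam i)^2 := by
              have := sub_ne_zero.mpr (hlamne i hi)
              positivity
            have hδle : δ^2 ≤ (lam j - lam i)^2 := by
              have h1 : δ ≤ |lam j - lam i| := Finset.inf'_le _ hi
              calc δ^2 ≤ |lam j - lam i|^2 := pow_le_pow_left₀ hδpos.le h1 2
                _ = (lam j - lam i)^2 := sq_abs _
            rw [div_pow, div_mul_eq_mul_div, div_le_iff₀ hsub]
            exact mul_le_mul_of_nonneg_left hδle (sq_nonneg _)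
        _ ≤ S := by
            rw [hSdef]
            exact Finset.sum_le_sum_of_subset_of_nonneg (Finset.subset_univ _)
              (fun i _ _ => sq_nonneg _)
    -- the squared bound
    have hIF : ‖IFj x‖ = |w d * z x j| * ‖T‖ := by
      rw [hIFj x, norm_smul, Real.norm_eq_abs]
    have hsq : ‖IFj x‖^2 * δ^2 ≤ (lam0 * w d * d)^2 := by
      calc ‖IFj x‖^2 * δ^2 = (w d * z x j)^2 * (‖T‖^2 * δ^2) := by
            rw [hIF, mul_pow, sq_abs]; ring
        _ ≤ (w d * z x j)^2 * S := mul_le_mul_of_nonneg_left hTδ (sq_nonneg _)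
        _ = (z x j)^2 * ((w d)^2 * S) := by ring
        _ ≤ S * ((w d)^2 * S) := mul_le_mul_of_nonneg_right hzjS (by positivity)
        _ = (w d)^2 * (S * S) := by ring
        _ ≤ (w d)^2 * ((lam0 * d) * (lam0 * d)) := by
            have hmm : S * S ≤ (lam0 * d) * (lam0 * d) := mul_le_mul hSd hSd hSnn (by positivity)
            exact mul_le_mul_of_nonneg_left hmm (sq_nonneg _)
        _ = (lam0 * w d * d)^2 := by ring
    have hrhs : (lam0 / δ * w d * d)^2 * δ^2 = (lam0 * w d * d)^2 := by
      field_simp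
    have hsq2 : ‖IFj x‖^2 ≤ (lam0 / δ * w d * d)^2 := by
      have h := hsq
      rw [← hrhs] at h
      exact le_of_mul_le_mul_right h (by positivity)
    have hnn : 0 ≤ lam0 / δ * w d * d := by positivity
    calc ‖IFj x‖ = Real.sqrt (‖IFj x‖^2) := (Real.sqrt_sq (norm_nonneg _)).symm
      _ ≤ Real.sqrt ((lam0 / δ * w d * d)^2) := Real.sqrt_le_sqrt hsq2
      _ = lam0 / δ * w d * d := Real.sqrt_sq hnn
      _ = lam0 / δ * w (mahal x μ0 V) * mahal x μ0 V := by rw [hddef]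
  · -- degenerate case: erase j is empty, IFj ≡ 0
    refine ⟨1, one_pos, fun x => ?_⟩
    rw [Finset.not_nonempty_iff_eq_empty] at hne
    have : IFj x = 0 := by rw [hIFj x, hne, Finset.sum_empty, smul_zero]
    rw [this, norm_zero, one_mul]
    exact mul_nonneg (hw0 _ (hd0 x)) (hd0 x)
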